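/- Let C be a Brown category. Then every diagram X : I → F, where I is a small filtered category and F is the category of compact objects, admits a minimal weak colimit; moreover, if U is the vertex of a minimal weak colimit cocone and V is the vertex of any weak colimit cocone on the same diagram, then U is a retract of V. -/

import Mathlib

/-!
Formalization of statements from N. P. Strickland,
"Axiomatic stable homotopy --- a survey" (arXiv:math/0307143).
-/

open CategoryTheory CategoryTheory.Limits CategoryTheory.Pretriangulated

universe w v u

namespace AxStable

variable {C : Type u} [Category.{v} C]

section Compact

variable [Preadditive C]

/-- The canonical map `⊕ᵢ Hom(A, Xᵢ) →+ Hom(A, ∐ᵢ Xᵢ)`. -/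
noncomputable def coprodComparison {ι : Type w} (A : C) (X : ι → C) [HasCoproduct X] :
    DirectSum ι (fun i => A ⟶ X i) →+ (A ⟶ ∐ X) :=
  letI := Classical.decEq ι
  DirectSum.toAddMonoid fun i =>
    AddMonoidHom.mk' (fun g => g ≫ Sigma.ι X i) (fun _ _ => Preadditive.add_comp _ _ _ _ _ _)

variable [HasCoproducts.{v} C]

/-- An object `A` is compact (small) if the canonical map `⊕ᵢ Hom(A, Xᵢ) → Hom(A, ∐ᵢ Xᵢ)`
is bijective for every set-indexed family `X`. -/
def IsCompactObj (A : C) : Prop :=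
  ∀ (ι : Type v) (X : ι → C), Function.Bijective (coprodComparison A X)

variable (C) in
/-- The full subcategory `F` of compact objects of `C`. -/
abbrev Cpt := ObjectProperty.FullSubcategory (fun A : C => IsCompactObj A)

variable (C) in
/-- The inclusion `F ⥤ C` of the compact objects. -/
abbrev cptInclusion : Cpt C ⥤ C := ObjectProperty.ι _

/-- The restricted Yoneda functor `h` on objects: `h_X = Hom_C(-, X)` restricted to the
compact objects, an object of the category `A` of additive functors `Fᵒᵖ ⥤ Ab`. -/
noncomputable def hFunctor (X : C) : (Cpt C)ᵒᵖ ⥤ AddCommGrpCat.{v} :=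
  (cptInclusion C).op ⋙ preadditiveYoneda.obj X

/-- The restricted Yoneda functor `h` on morphisms. -/
noncomputable def hMap {X Y : C} (u : X ⟶ Y) : hFunctor X ⟶ hFunctor Y :=
  CategoryTheory.Functor.whiskerLeft _ (preadditiveYoneda.map u)

variable (C) in
/-- Fullness of the restricted Yoneda functor `h : C → A`: every natural transformation
`h_X ⟶ h_Y` is of the form `h_u` for a morphism `u : X ⟶ Y`. -/
def HIsFull : Prop :=
  ∀ (X Y : C) (φ : hFunctor X ⟶ hFunctor Y), ∃ u : X ⟶ Y, hMap u = φ

end Compact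

section Triangulated

variable [Preadditive C] [HasZeroObject C] [HasShift C ℤ]
  [∀ n : ℤ, (shiftFunctor C n).Additive] [Pretriangulated C] [HasCoproducts.{v} C]

variable (C) in
/-- `C` is compactly generated if there is a set `G` of compact objects such that any object
`X` with `Hom(Σⁿ A, X) = 0` for all `A ∈ G` and `n : ℤ` is a zero object. -/
def CompactlyGenerated : Prop :=
  ∃ G : Set C, (∀ A ∈ G, IsCompactObj A) ∧
    ∀ X : C, (∀ A ∈ G, ∀ n : ℤ, ∀ f : (shiftFunctor C n).obj A ⟶ X, f = 0) → IsZero X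

/-- A functor `H : Fᵒᵖ ⥤ Ab` is cohomological if it is additive and sends every distinguished
triangle `X ⟶ Y ⟶ Z ⟶ ΣX` with compact vertices to an exact sequence `H(Z) → H(Y) → H(X)`. -/
def IsCohomological (H : (Cpt C)ᵒᵖ ⥤ AddCommGrpCat.{v}) : Prop :=
  H.Additive ∧
  ∀ (T : Triangle C) (_ : T ∈ (distTriang C)) (h1 : IsCompactObj T.obj₁)
    (h2 : IsCompactObj T.obj₂) (h3 : IsCompactObj T.obj₃),
    Function.Exact
      (H.map (Quiver.Hom.op (show (⟨T.obj₂, h2⟩ : Cpt C) ⟶ ⟨T.obj₃, h3⟩ from ObjectProperty.homMk T.mor₂)))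
      (H.map (Quiver.Hom.op (show (⟨T.obj₁, h1⟩ : Cpt C) ⟶ ⟨T.obj₂, h2⟩ from ObjectProperty.homMk T.mor₁)))

end Triangulated

section Brown

variable [Preadditive C] [HasZeroObject C] [HasShift C ℤ]
  [∀ n : ℤ, (shiftFunctor C n).Additive] [Pretriangulated C] [HasCoproducts.{v} C]

variable (C) in
/-- A Brown category: a compactly generated triangulated category in which the restricted
Yoneda functor `h` is full and the functors isomorphic to some `h_X` are exactly the
cohomological ones. -/
def IsBrownCategory : Prop :=
  CompactlyGenerated C ∧ HIsFull C ∧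
    ∀ H : (Cpt C)ᵒᵖ ⥤ AddCommGrpCat.{v},
      ((∃ X : C, Nonempty (hFunctor X ≅ H)) ↔ IsCohomological H)

end Brown

section WeakColimit

variable [Preadditive C] [HasCoproducts.{v} C]

/-- A cocone `c` on a filtered diagram of compact objects is a weak colimit if for every `Y`
the induced map `Hom(c.pt, Y) → lim_I Hom(Xᵢ, Y)` is surjective. -/
def IsWeakColimit {I : Type v} [SmallCategory I] (X : I ⥤ Cpt C)
    (c : Cocone (X ⋙ cptInclusion C)) : Prop :=
  ∀ (Y : C) (f : ∀ i, (X ⋙ cptInclusion C).obj i ⟶ Y),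
    (∀ {i j : I} (φ : i ⟶ j), (X ⋙ cptInclusion C).map φ ≫ f j = f i) →
    ∃ g : c.pt ⟶ Y, ∀ i, c.ι.app i ≫ g = f i

/-- A weak colimit is minimal if for every compact `Z` the canonical map
`colim_I Hom(Z, Xᵢ) → Hom(Z, c.pt)` is bijective (expressed elementwise, as appropriate for a
filtered colimit of abelian groups). -/
def IsMinimalWeakColimit {I : Type v} [SmallCategory I] (X : I ⥤ Cpt C)
    (c : Cocone (X ⋙ cptInclusion C)) : Prop :=
  IsWeakColimit X c ∧
    ∀ Z : Cpt C,
      (∀ g : Z.obj ⟶ c.pt, ∃ (i : I) (f : Z.obj ⟶ (X ⋙ cptInclusion C).obj i),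
        f ≫ c.ι.app i = g) ∧
      (∀ (i j : I) (f : Z.obj ⟶ (X ⋙ cptInclusion C).obj i)
        (f' : Z.obj ⟶ (X ⋙ cptInclusion C).obj j), f ≫ c.ι.app i = f' ≫ c.ι.app j →
        ∃ (k : I) (α : i ⟶ k) (β : j ⟶ k),
          f ≫ (X ⋙ cptInclusion C).map α = f' ≫ (X ⋙ cptInclusion C).map β)

end WeakColimit


section AuxShift

variable [Preadditive C] [HasCoproducts.{v} C]

set_option linter.unusedSectionVars false in
lemma coprodComparison_of {ι : Type w} [inst : DecidableEq ι] (A : C) (X : ι → C)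
    [HasCoproduct X] (i : ι) (g : A ⟶ X i) :
    coprodComparison A X (DirectSum.of (fun i => A ⟶ X i) i g) = g ≫ Sigma.ι X i := by
  obtain rfl : inst = Classical.decEq ι := Subsingleton.elim _ _
  letI := Classical.decEq ι
  exact DirectSum.toAddMonoid_of
    (fun i => AddMonoidHom.mk' (fun g => g ≫ Sigma.ι X i)
      (fun _ _ => Preadditive.add_comp _ _ _ _ _ _)) i g

variable [HasShift C ℤ] [∀ n : ℤ, (shiftFunctor C n).Additive]

lemma isCompactObj_shift {A : C} (hA : IsCompactObj A) (n : ℤ) :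
    IsCompactObj ((shiftFunctor C n).obj A) := by
  intro ι X
  letI := Classical.decEq ι
  set F := shiftFunctor C n with hF
  set G := shiftFunctor C (-n) with hG
  let adj : F ⊣ G := (shiftEquiv C n).toAdjunction
  let X' : ι → C := fun i => G.obj (X i)
  let σe : ((F.obj A ⟶ ∐ X)) ≃ (A ⟶ ∐ X') :=
    (adj.homEquiv A (∐ X)).trans
      (Iso.homCongr (Iso.refl A) (asIso (sigmaComparison G X)).symm)
  have hσadd : ∀ f₁ f₂, σe (f₁ + f₂) = σe f₁ + σe f₂ := by
    intro f₁ f₂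
    simp [σe, Adjunction.homEquiv_unit, Functor.map_add, Preadditive.comp_add,
      Preadditive.add_comp]
  let σ' : ((F.obj A ⟶ ∐ X)) →+ (A ⟶ ∐ X') := AddMonoidHom.mk' σe hσadd
  have hqadd : ∀ (i : ι) (f₁ f₂ : F.obj A ⟶ X i),
      adj.homEquiv A (X i) (f₁ + f₂) = adj.homEquiv A (X i) f₁ + adj.homEquiv A (X i) f₂ := by
    intro i f₁ f₂
    simp [Adjunction.homEquiv_unit, Functor.map_add, Preadditive.comp_add]
  let q : ∀ i, (F.obj A ⟶ X i) ≃+ (A ⟶ X' i) := fun i =>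
    AddEquiv.mk' (adj.homEquiv A (X i)) (hqadd i)
  let D : DirectSum ι (fun i => F.obj A ⟶ X i) ≃+ DirectSum ι (fun i => A ⟶ X' i) :=
    DFinsupp.mapRange.addEquiv q
  have hD : ∀ (i : ι) (g : F.obj A ⟶ X i),
      D (DirectSum.of (fun i => F.obj A ⟶ X i) i g)
        = DirectSum.of (fun i => A ⟶ X' i) i (q i g) := by
    intro i g
    exact DFinsupp.mapRange_single (hf := fun i => (q i).map_zero)
  have hι : ∀ i : ι, G.map (Sigma.ι X i) ≫ inv (sigmaComparison G X) = Sigma.ι X' i := by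
    intro i
    rw [IsIso.comp_inv_eq, ι_comp_sigmaComparison]
  have heq : σ'.comp (coprodComparison (F.obj A) X)
      = (coprodComparison A X').comp D.toAddMonoidHom := by
    refine DirectSum.addHom_ext fun i g => ?_
    simp only [AddMonoidHom.comp_apply, AddEquiv.coe_toAddMonoidHom, hD]
    rw [coprodComparison_of, coprodComparison_of]
    show σe (g ≫ Sigma.ι X i) = (q i) g ≫ Sigma.ι X' i
    have h1 : σe (g ≫ Sigma.ι X i)
        = (adj.homEquiv A (∐ X)) (g ≫ Sigma.ι X i) ≫ inv (sigmaComparison G X) := by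
      simp [σe]
    rw [h1, Adjunction.homEquiv_naturality_right, Category.assoc, hι]
    rfl
  have hfun : ∀ d, σe (coprodComparison (F.obj A) X d)
      = coprodComparison A X' (D d) := fun d => DFunLike.congr_fun heq d
  have hcc : ⇑(coprodComparison (F.obj A) X) = σe.symm ∘ ⇑(coprodComparison A X') ∘ ⇑D := by
    funext d
    simp only [Function.comp_apply, ← hfun, Equiv.symm_apply_apply]
  rw [hcc]
  exact σe.symm.bijective.comp ((hA ι X').comp D.bijective)

end AuxShift

section AuxDiag

variable [Preadditive C] [HasCoproducts.{v} C]

/-- application formula for `hMap`. -/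
lemma hMap_app {A B : C} (u : A ⟶ B) (Z : (Cpt C)ᵒᵖ) (x : Z.unop.obj ⟶ A) :
    (hMap u).app Z x = x ≫ u := rfl

/-- application formula for the functorial action of `hFunctor`. -/
lemma hFunctor_map_app (U : C) {Z Z' : Cpt C} (a : Z' ⟶ Z) (x : Z.obj ⟶ U) :
    (hFunctor U).map a.op x = (cptInclusion C).map a ≫ x := rfl

variable {I : Type v} [SmallCategory I]

/-- The diagram `i ↦ h_{X i}` in the functor category. -/
noncomputable def diagY (X : I ⥤ Cpt C) : I ⥤ ((Cpt C)ᵒᵖ ⥤ AddCommGrpCat.{v}) :=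
  X ⋙ cptInclusion C ⋙ preadditiveYoneda ⋙
    (Functor.whiskeringLeft ((Cpt C)ᵒᵖ) (Cᵒᵖ) AddCommGrpCat.{v}).obj (cptInclusion C).op

lemma diagY_obj (X : I ⥤ Cpt C) (i : I) : (diagY X).obj i = hFunctor ((X.obj i).obj) := rfl

lemma diagY_map (X : I ⥤ Cpt C) {i j : I} (φ : i ⟶ j) :
    (diagY X).map φ = hMap ((cptInclusion C).map (X.map φ)) := rfl

/-- the Yoneda-type computation for natural transformations out of `hFunctor` of a
compact object. -/
lemma nat_app_eq {A : Cpt C} {U : C} (ψ : hFunctor A.obj ⟶ hFunctor U) (Z : Cpt C)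
    (g : Z ⟶ A) :
    ψ.app (Opposite.op Z) ((cptInclusion C).map g)
      = (cptInclusion C).map g ≫ ψ.app (Opposite.op A) (𝟙 A.obj) := by
  have h := ψ.naturality g.op
  have h2 := ConcreteCategory.congr_hom h (𝟙 A.obj)
  erw [comp_apply, comp_apply] at h2
  have e1 : (hFunctor A.obj).map g.op (𝟙 A.obj)
      = (cptInclusion C).map g := Category.comp_id _
  have e2 : (hFunctor U).map g.op (ψ.app (Opposite.op A) (𝟙 A.obj))
      = (cptInclusion C).map g ≫ ψ.app (Opposite.op A) (𝟙 A.obj) := rfl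
  rw [e1] at h2
  rw [h2, e2]

end AuxDiag

variable [Preadditive C] [HasZeroObject C] [HasShift C ℤ]
  [∀ n : ℤ, (shiftFunctor C n).Additive] [Pretriangulated C] [IsTriangulated C]
  [HasCoproducts.{v} C]


section AuxMain

variable [Preadditive C] [HasZeroObject C] [HasShift C ℤ]
  [∀ n : ℤ, (shiftFunctor C n).Additive] [Pretriangulated C]
  [HasCoproducts.{v} C]

variable {I : Type v} [SmallCategory I] [IsFiltered I]

set_option maxHeartbeats 1000000 in
theorem exists_minimal (hBrown : IsBrownCategory C) (X : I ⥤ Cpt C) :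
    ∃ c : Cocone (X ⋙ cptInclusion C), IsMinimalWeakColimit X c := by
  classical
  let Y := diagY X
  let H := colimit Y
  haveI hforget : PreservesColimitsOfShape I (forget AddCommGrpCat.{v}) := inferInstance
  let ev : (Cpt C)ᵒᵖ → (((Cpt C)ᵒᵖ ⥤ AddCommGrpCat.{v}) ⥤ Type v) := fun Z =>
    (evaluation ((Cpt C)ᵒᵖ) AddCommGrpCat.{v}).obj Z ⋙ forget AddCommGrpCat.{v}
  haveI hevp : ∀ Z : (Cpt C)ᵒᵖ, PreservesColimitsOfShape I (ev Z) := fun Z => by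
    have : PreservesColimitsOfShape I ((evaluation ((Cpt C)ᵒᵖ) AddCommGrpCat.{v}).obj Z) :=
      inferInstance
    exact comp_preservesColimitsOfShape _ _
  let t : ∀ Z : (Cpt C)ᵒᵖ, Cocone (Y ⋙ ev Z) := fun Z => (ev Z).mapCocone (colimit.cocone Y)
  let ht : ∀ Z : (Cpt C)ᵒᵖ, IsColimit (t Z) := fun Z =>
    isColimitOfPreserves (ev Z) (colimit.isColimit Y)
  -- elementwise surjectivity
  have hsurj : ∀ (Z : (Cpt C)ᵒᵖ) (x : H.obj Z),
      ∃ (i : I) (y : Z.unop.obj ⟶ (X.obj i).obj), (colimit.ι Y i).app Z y = x := by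
    intro Z x
    obtain ⟨i, y, hy⟩ := Types.jointly_surjective (Y ⋙ ev Z) (ht Z) x
    exact ⟨i, y, hy⟩
  -- elementwise equality criterion
  have heqc : ∀ (Z : (Cpt C)ᵒᵖ) (i j : I) (yi : Z.unop.obj ⟶ (X.obj i).obj)
      (yj : Z.unop.obj ⟶ (X.obj j).obj),
      (colimit.ι Y i).app Z yi = (colimit.ι Y j).app Z yj →
      ∃ (k : I) (α : i ⟶ k) (β : j ⟶ k),
        yi ≫ (cptInclusion C).map (X.map α) = yj ≫ (cptInclusion C).map (X.map β) := by
    intro Z i j yi yj hh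
    have := (Types.FilteredColimit.isColimit_eq_iff (Y ⋙ ev Z) (ht Z)
      (xi := yi) (xj := yj)).1 hh
    obtain ⟨k, α, β, hk⟩ := this
    refine ⟨k, α, β, ?_⟩
    have eα : ((Y ⋙ ev Z).map α) yi = yi ≫ (cptInclusion C).map (X.map α) := rfl
    have eβ : ((Y ⋙ ev Z).map β) yj = yj ≫ (cptInclusion C).map (X.map β) := rfl
    rw [eα, eβ] at hk
    exact hk
  -- elementwise naturality of the colimit injections
  have hnat : ∀ {Z Z' : (Cpt C)ᵒᵖ} (a : Z ⟶ Z') (i : I) (y : Z.unop.obj ⟶ (X.obj i).obj),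
      H.map a ((colimit.ι Y i).app Z y)
        = (colimit.ι Y i).app Z' ((cptInclusion C).map a.unop ≫ y) := by
    intro Z Z' a i y
    have h := (colimit.ι Y i).naturality a
    have h2 := ConcreteCategory.congr_hom h y
    erw [comp_apply, comp_apply] at h2
    have e : (Y.obj i).map a y = (cptInclusion C).map a.unop ≫ y := rfl
    rw [e] at h2
    exact h2.symm
  -- compatibility of the injections
  have hw : ∀ {i k : I} (α : i ⟶ k) (Z : (Cpt C)ᵒᵖ) (y : Z.unop.obj ⟶ (X.obj i).obj),
      (colimit.ι Y i).app Z y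
        = (colimit.ι Y k).app Z (y ≫ (cptInclusion C).map (X.map α)) := by
    intro i k α Z y
    have h := colimit.w Y α
    have h2 := congr_app h Z
    have h3 := ConcreteCategory.congr_hom h2.symm y
    erw [NatTrans.comp_app, comp_apply] at h3
    have e : (Y.map α).app Z y = y ≫ (cptInclusion C).map (X.map α) := rfl
    rw [e] at h3
    exact h3
  -- zero elements
  have hzero : ∀ (Z : (Cpt C)ᵒᵖ) (i : I),
      (colimit.ι Y i).app Z (0 : Z.unop.obj ⟶ (X.obj i).obj) = 0 :=
    fun Z i => map_zero _
  -- additivity of H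
  haveI hHadd : H.Additive := by
    constructor
    intro Za Zb f g
    ext x
    obtain ⟨i, y, rfl⟩ := hsurj Za x
    have e1 : H.map (f + g) ((colimit.ι Y i).app Za y)
        = (colimit.ι Y i).app Zb ((cptInclusion C).map (f + g).unop ≫ y) := hnat _ _ _
    have e2 : (cptInclusion C).map (f + g).unop ≫ y
        = (cptInclusion C).map f.unop ≫ y + (cptInclusion C).map g.unop ≫ y := by
      have : (f + g).unop = f.unop + g.unop := rfl
      rw [this]
      exact Preadditive.add_comp _ _ _ _ _ _
    erw [e1, e2, map_add]
    have e3 : H.map f ((colimit.ι Y i).app Za y)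
        = (colimit.ι Y i).app Zb ((cptInclusion C).map f.unop ≫ y) := hnat _ _ _
    have e4 : H.map g ((colimit.ι Y i).app Za y)
        = (colimit.ι Y i).app Zb ((cptInclusion C).map g.unop ≫ y) := hnat _ _ _
    have e5 : (H.map f + H.map g) ((colimit.ι Y i).app Za y)
        = H.map f ((colimit.ι Y i).app Za y) + H.map g ((colimit.ι Y i).app Za y) := rfl
    rw [e5, e3, e4]
  -- H is cohomological
  have hcoh : IsCohomological H := by
    refine ⟨hHadd, ?_⟩
    intro T hT h1 h2 h3
    set A1 : Cpt C := ⟨T.obj₁, h1⟩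
    set A2 : Cpt C := ⟨T.obj₂, h2⟩
    set A3 : Cpt C := ⟨T.obj₃, h3⟩
    set m1 : A1 ⟶ A2 := ObjectProperty.homMk T.mor₁
    set m2 : A2 ⟶ A3 := ObjectProperty.homMk T.mor₂
    intro x
    constructor
    · -- if H(m1ᵒᵖ) x = 0 then x is in the image of H(m2ᵒᵖ)
      intro hx
      obtain ⟨i, y, rfl⟩ := hsurj (Opposite.op A2) x
      have e1 : H.map m1.op ((colimit.ι Y i).app (Opposite.op A2) y)
          = (colimit.ι Y i).app (Opposite.op A1) ((cptInclusion C).map m1 ≫ y) := hnat _ _ _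
      rw [e1] at hx
      rw [← hzero (Opposite.op A1) i] at hx
      obtain ⟨k, α, β, hk⟩ := heqc _ _ _ _ _ hx
      rw [zero_comp] at hk
      have hzc : T.mor₁ ≫ (y ≫ (cptInclusion C).map (X.map α)) = 0 := by
        rw [← Category.assoc]
        exact hk
      obtain ⟨z, hz⟩ := Triangle.yoneda_exact₂ T hT (y ≫ (cptInclusion C).map (X.map α)) hzc
      refine ⟨(colimit.ι Y k).app (Opposite.op A3) z, ?_⟩
      have e2 : H.map m2.op ((colimit.ι Y k).app (Opposite.op A3) z)
          = (colimit.ι Y k).app (Opposite.op A2) ((cptInclusion C).map m2 ≫ z) := hnat _ _ _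
      rw [e2]
      have e3 : (cptInclusion C).map m2 ≫ z = y ≫ (cptInclusion C).map (X.map α) := hz.symm
      rw [e3]
      exact (hw α (Opposite.op A2) y).symm
    · -- the composite is zero
      rintro ⟨w, rfl⟩
      obtain ⟨i, y, rfl⟩ := hsurj (Opposite.op A3) w
      have e1 : H.map m2.op ((colimit.ι Y i).app (Opposite.op A3) y)
          = (colimit.ι Y i).app (Opposite.op A2) ((cptInclusion C).map m2 ≫ y) := hnat _ _ _
      have e2 : H.map m1.op ((colimit.ι Y i).app (Opposite.op A2)
          ((cptInclusion C).map m2 ≫ y))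
          = (colimit.ι Y i).app (Opposite.op A1)
            ((cptInclusion C).map m1 ≫ (cptInclusion C).map m2 ≫ y) := hnat _ _ _
      rw [e1, e2]
      have e3 : (cptInclusion C).map m1 ≫ (cptInclusion C).map m2 ≫ y
          = (0 : T.obj₁ ⟶ (X.obj i).obj) := by
        rw [← Category.assoc]
        have : (cptInclusion C).map m1 ≫ (cptInclusion C).map m2 = T.mor₁ ≫ T.mor₂ := rfl
        rw [this, comp_distTriang_mor_zero₁₂ T hT, zero_comp]
      rw [e3]
      exact hzero _ _
  -- representability
  obtain ⟨U, ⟨Φ⟩⟩ := (hBrown.2.2 H).2 hcoh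
  -- the structure maps
  let ψ : ∀ i : I, hFunctor ((X.obj i).obj) ⟶ hFunctor U := fun i =>
    colimit.ι Y i ≫ Φ.inv
  let u : ∀ i : I, (X.obj i).obj ⟶ U := fun i => (ψ i).app (Opposite.op (X.obj i)) (𝟙 _)
  have hψ : ∀ (i : I) (Z : Cpt C) (g : Z.obj ⟶ (X.obj i).obj),
      (ψ i).app (Opposite.op Z) g = g ≫ u i := by
    intro i Z g
    exact nat_app_eq (ψ i) Z (ObjectProperty.homMk g)
  have hψinv : ∀ (i : I) (Z : Cpt C) (g : Z.obj ⟶ (X.obj i).obj),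
      Φ.inv.app (Opposite.op Z) ((colimit.ι Y i).app (Opposite.op Z) g) = g ≫ u i := by
    intro i Z g
    have := hψ i Z g
    rw [← this]
    have e : (ψ i).app (Opposite.op Z) g
        = Φ.inv.app (Opposite.op Z) ((colimit.ι Y i).app (Opposite.op Z) g) := by
      have h2 := congr_app (show ψ i = colimit.ι Y i ≫ Φ.inv from rfl)
        (Opposite.op Z)
      have h3 := ConcreteCategory.congr_hom h2 g
      erw [NatTrans.comp_app, comp_apply] at h3
      exact h3
    rw [e]
  have hbij : ∀ Z : Cpt C, Function.Bijective (Φ.inv.app (Opposite.op Z)) := by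
    intro Z
    haveI : IsIso (Φ.inv.app (Opposite.op Z)) := inferInstance
    exact ConcreteCategory.bijective_of_isIso (Φ.inv.app (Opposite.op Z))
  -- compatibility: cocone
  have hcomp : ∀ {i j : I} (φ : i ⟶ j), (cptInclusion C).map (X.map φ) ≫ u j = u i := by
    intro i j φ
    have h1 : (ψ j).app (Opposite.op (X.obj i)) ((cptInclusion C).map (X.map φ))
        = (cptInclusion C).map (X.map φ) ≫ u j := hψ j _ _
    have h2 : (colimit.ι Y i).app (Opposite.op (X.obj i)) (𝟙 (X.obj i).obj)
        = (colimit.ι Y j).app (Opposite.op (X.obj i))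
          (𝟙 (X.obj i).obj ≫ (cptInclusion C).map (X.map φ)) := hw φ _ _
    have h3 : Φ.inv.app (Opposite.op (X.obj i))
        ((colimit.ι Y i).app (Opposite.op (X.obj i)) (𝟙 (X.obj i).obj)) = u i :=
      by
        have := hψinv i (X.obj i) (𝟙 (X.obj i).obj)
        rw [this, Category.id_comp]
    have h4 : Φ.inv.app (Opposite.op (X.obj i))
        ((colimit.ι Y j).app (Opposite.op (X.obj i))
          (𝟙 (X.obj i).obj ≫ (cptInclusion C).map (X.map φ)))
        = (𝟙 (X.obj i).obj ≫ (cptInclusion C).map (X.map φ)) ≫ u j :=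
      hψinv j (X.obj i) _
    rw [← h3, h2, h4, Category.id_comp]
  let c : Cocone (X ⋙ cptInclusion C) :=
    { pt := U
      ι :=
        { app := u
          naturality := by
            intro i j φ
            simp only [Functor.comp_map, Functor.const_obj_map, Category.comp_id]
            exact (hcomp φ).trans (Category.comp_id _).symm } }
  refine ⟨c, ?_, ?_⟩
  · -- weak colimit
    intro W f hf
    let χ : Cocone Y :=
      { pt := hFunctor W
        ι :=
          { app := fun i => hMap (f i)
            naturality := by
              intro i j φ
              simp only [Functor.const_obj_map, Category.comp_id]
              have e0 : Y.map φ = hMap ((X ⋙ cptInclusion C).map φ) := rfl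
              rw [e0]
              have h2 : hMap ((X ⋙ cptInclusion C).map φ) ≫ hMap (f j)
                  = hMap ((X ⋙ cptInclusion C).map φ ≫ f j) := by
                dsimp only [hMap]
                erw [← Functor.whiskerLeft_comp, ← preadditiveYoneda.map_comp]
              erw [h2, hf φ]
              exact (Category.comp_id _).symm } }
    let δ : H ⟶ hFunctor W := colimit.desc Y χ
    obtain ⟨g, hg⟩ := hBrown.2.1 U W (Φ.hom ≫ δ)
    refine ⟨g, fun i => ?_⟩
    -- evaluate hMap g at u i
    have e1 : (hMap g).app (Opposite.op (X.obj i)) (u i) = u i ≫ g := rfl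
    have e2 := ConcreteCategory.congr_hom
      (congr_app hg (Opposite.op (X.obj i))) (u i)
    rw [NatTrans.comp_app, comp_apply] at e2
    rw [e1] at e2
    -- now compute the right-hand side
    have h3 : Φ.hom.app (Opposite.op (X.obj i)) (u i)
        = (colimit.ι Y i).app (Opposite.op (X.obj i)) (𝟙 (X.obj i).obj) := by
      have h5 := hψinv i (X.obj i) (𝟙 (X.obj i).obj)
      rw [Category.id_comp] at h5
      rw [← h5]
      have h6 := ConcreteCategory.congr_hom
        (congr_app Φ.inv_hom_id (Opposite.op (X.obj i)))
        ((colimit.ι Y i).app (Opposite.op (X.obj i)) (𝟙 (X.obj i).obj))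
      rw [NatTrans.comp_app, comp_apply] at h6
      rw [h6]
      rfl
    have h7 : δ.app (Opposite.op (X.obj i))
        ((colimit.ι Y i).app (Opposite.op (X.obj i)) (𝟙 (X.obj i).obj))
        = (hMap (f i)).app (Opposite.op (X.obj i)) (𝟙 (X.obj i).obj) := by
      have h8 := congr_app (colimit.ι_desc χ i) (Opposite.op (X.obj i))
      have h9 := ConcreteCategory.congr_hom h8 (𝟙 (X.obj i).obj)
      erw [NatTrans.comp_app, comp_apply] at h9
      exact h9
    have h10 : (hMap (f i)).app (Opposite.op (X.obj i)) (𝟙 (X.obj i).obj)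
        = 𝟙 (X.obj i).obj ≫ f i := rfl
    rw [h3, h7, h10, Category.id_comp] at e2
    exact e2
  · -- minimality
    intro Z
    constructor
    · intro g
      obtain ⟨i, y, hy⟩ := hsurj (Opposite.op Z) (Φ.hom.app (Opposite.op Z) g)
      refine ⟨i, y, ?_⟩
      have h1 := hψinv i Z y
      rw [hy] at h1
      have h2b := congr_app Φ.hom_inv_id (Opposite.op Z)
      have h2 := ConcreteCategory.congr_hom h2b g
      erw [NatTrans.comp_app, comp_apply] at h2
      have h2' : Φ.inv.app (Opposite.op Z) (Φ.hom.app (Opposite.op Z) g) = g :=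
        h2.trans rfl
      rw [h2'] at h1
      exact h1.symm
    · intro i j f f' hff
      have h1 := hψinv i Z f
      have h2 := hψinv j Z f'
      have h3 : Φ.inv.app (Opposite.op Z) ((colimit.ι Y i).app (Opposite.op Z) f)
          = Φ.inv.app (Opposite.op Z) ((colimit.ι Y j).app (Opposite.op Z) f') := by
        rw [h1, h2]
        exact hff
      have h4 := (hbij Z).1 h3
      exact heqc _ _ _ _ _ h4

end AuxMain

/-- in a Brown category, every filtered diagram of compact objects admits a
minimal weak colimit, and the vertex of a minimal weak colimit is a retract of the vertex of
any weak colimit of the same diagram. -/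
theorem minimal_weak_colimit_exists (hBrown : IsBrownCategory C)
    (I : Type v) [SmallCategory I] [IsFiltered I] (X : I ⥤ Cpt C) :
    (∃ c : Cocone (X ⋙ cptInclusion C), IsMinimalWeakColimit X c) ∧
      ∀ (c c' : Cocone (X ⋙ cptInclusion C)), IsMinimalWeakColimit X c → IsWeakColimit X c' →
        ∃ (s : c.pt ⟶ c'.pt) (r : c'.pt ⟶ c.pt), s ≫ r = 𝟙 c.pt := by
  constructor
  · exact exists_minimal hBrown X
  · intro c c' hmin hweak
    obtain ⟨s, hs⟩ := hmin.1 c'.pt c'.ι.app (fun φ => c'.w φ)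
    obtain ⟨r, hr⟩ := hweak c.pt c.ι.app (fun φ => c.w φ)
    have he : ∀ (Z : Cpt C) (g : Z.obj ⟶ c.pt), g ≫ (s ≫ r) = g := by
      intro Z g
      obtain ⟨i, f, hf⟩ := (hmin.2 Z).1 g
      have h1 : c.ι.app i ≫ s ≫ r = c.ι.app i := by
        rw [← Category.assoc, hs i, hr i]
      rw [← hf, Category.assoc, h1]
    obtain ⟨W, m2, m3, hT⟩ := Pretriangulated.distinguished_cocone_triangle (s ≫ r)
    have hWzero : ∀ (Z : C), IsCompactObj Z → ∀ f : Z ⟶ W, f = 0 := by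
      intro Z hZ f
      let adj := (shiftEquiv C (1 : ℤ)).symm.toAdjunction
      have h31 : m3 ≫ (shiftFunctor C (1 : ℤ)).map (s ≫ r) = 0 :=
        comp_distTriang_mor_zero₃₁ _ hT
      have ht0 : (f ≫ m3) ≫ (shiftEquiv C (1 : ℤ)).symm.inverse.map (s ≫ r) = 0 := by
        show (f ≫ m3) ≫ (shiftFunctor C (1 : ℤ)).map (s ≫ r) = 0
        rw [Category.assoc, h31, comp_zero]
      have hfm3 : f ≫ m3 = 0 := by
        have hsymm0 : (adj.homEquiv Z c.pt).symm 0 = 0 := by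
          rw [Adjunction.homEquiv_counit, Functor.map_zero, zero_comp]
        have h5 := adj.homEquiv_naturality_right_symm (f ≫ m3) (s ≫ r)
        erw [ht0, hsymm0] at h5
        have h6 : ((adj.homEquiv Z c.pt).symm (f ≫ m3)) ≫ (s ≫ r)
            = (adj.homEquiv Z c.pt).symm (f ≫ m3) :=
          he ⟨(shiftFunctor C (-1 : ℤ)).obj Z, isCompactObj_shift hZ (-1)⟩
            ((adj.homEquiv Z c.pt).symm (f ≫ m3))
        have h7 : (adj.homEquiv Z c.pt).symm (f ≫ m3) = 0 := by
          rw [← h6, h5]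
        have h8 := congrArg (adj.homEquiv Z c.pt) h7
        rw [Equiv.apply_symm_apply] at h8
        erw [h8, Adjunction.homEquiv_unit, Functor.map_zero, comp_zero]
        rfl
      obtain ⟨g, hg⟩ := Triangle.coyoneda_exact₃ _ hT f hfm3
      simp only [Triangle.mk_mor₂] at hg
      have hge : g ≫ (s ≫ r) = g := he ⟨Z, hZ⟩ g
      have h12 : (s ≫ r) ≫ m2 = 0 := comp_distTriang_mor_zero₁₂ _ hT
      erw [hg, ← hge, Category.assoc, h12, comp_zero]
      rfl
    obtain ⟨Gs, hG1, hG2⟩ := hBrown.1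
    have hW : IsZero W :=
      hG2 W (fun A hA n f0 => hWzero _ (isCompactObj_shift (hG1 A hA) n) f0)
    haveI : IsIso (s ≫ r) := (Triangle.isZero₃_iff_isIso₁ _ hT).1 hW
    exact ⟨s, r ≫ inv (s ≫ r), by rw [← Category.assoc]; exact IsIso.hom_inv_id (s ≫ r)⟩

end AxStable
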